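/- Let v₁, v₂, u be as follows: v₁, v₂ ∈ ℤ² primitive with det(v₁,v₂) > 0, u ∈ ℤ² primitive with det(u,v₂) > 0 and det(u,v₁) ≠ 0, and u not on the lines ℝv₁, ℝv₂. Define φ(ξ) = −(1/⟨ξ,u⟩)[1/(1−e^{⟨ξ,v₂⟩/det(u,v₂)}) − 1/(1−e^{⟨ξ,v₁⟩/det(u,v₁)})]. Then the product ⟨ξ,v₁⟩⟨ξ,v₂⟩ φ(ξ) extends to an analytic function in a neighborhood of ξ = 0 in (ℝ²)*. -/

import Mathlib

open Real

/-- The divided difference of `exp` at `0`: `(exp x - 1)/x`, with value `1` at `0`. -/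
noncomputable def auxEdd : ℝ → ℝ := dslope Real.exp 0

lemma auxEdd_analytic : AnalyticAt ℝ auxEdd 0 := by
  obtain ⟨p, hp⟩ := analyticAt_rexp (x := (0:ℝ))
  exact ⟨p.fslope, hp.has_fpower_series_dslope_fslope⟩

lemma auxEdd_zero : auxEdd 0 = 1 := by
  simp [auxEdd, dslope, Real.deriv_exp]

lemma auxEdd_ne {x : ℝ} (hx : x ≠ 0) : auxEdd x = (Real.exp x - 1) / x := by
  simp only [auxEdd, dslope_of_ne _ hx, slope, sub_zero, Real.exp_zero, vsub_eq_sub,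
    smul_eq_mul]
  ring

lemma aux_exp_ne_one {x : ℝ} (hx : x ≠ 0) : Real.exp x ≠ 1 := by
  intro h
  apply hx
  have h2 : Real.exp x = Real.exp 0 := by rw [h, Real.exp_zero]
  exact Real.exp_injective h2

/-- The analytic extension of `x / (1 - exp x)`. -/
noncomputable def auxf : ℝ → ℝ := fun x => -(auxEdd x)⁻¹

lemma auxf_analytic : AnalyticAt ℝ auxf 0 :=
  (auxEdd_analytic.inv (by rw [auxEdd_zero]; norm_num)).neg

lemma auxf_ne {x : ℝ} (hx : x ≠ 0) : auxf x = x / (1 - Real.exp x) := by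
  have he : Real.exp x - 1 ≠ 0 := sub_ne_zero.2 (aux_exp_ne_one hx)
  have he' : (1 : ℝ) - Real.exp x ≠ 0 := fun h => he (by linarith)
  rw [auxf, auxEdd_ne hx]
  field_simp
  ring

lemma aux_algebra (p₁ p₂ s d₁ d₂ c e₁ e₂ : ℝ) (hs : s ≠ 0) (hd₁ : d₁ ≠ 0) (hd₂ : d₂ ≠ 0)
    (hc : c ≠ 0) (he₁ : 1 - e₁ ≠ 0) (he₂ : 1 - e₂ ≠ 0) (he₁0 : e₁ ≠ 0) :
    -(d₁ * (p₁ / d₁ / (1 - e₁)) * (d₂ * (p₂ / d₂ / (1 - e₂))) * e₁ *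
        (c * ((e₂ / e₁ - 1) / (c * s)))) =
      p₁ * p₂ * (-(1 / s) * (1 / (1 - e₂) - 1 / (1 - e₁))) := by
  field_simp
  ring

/-- The product `⟨ξ,v₁⟩⟨ξ,v₂⟩ φ(ξ)`, where `φ` is the mixed valuation `S^L(𝔞)(ξ)` of the
cone `𝔞 = ℝ₊v₁ + ℝ₊v₂` with `L = ℝu` transverse to both edges (formula (5)),
extends analytically near `ξ = 0`. -/
theorem mixed_valuation_product_analytic (v₁ v₂ u : Fin 2 → ℤ)
    (hv₁ : IsCoprime (v₁ 0) (v₁ 1)) (hv₂ : IsCoprime (v₂ 0) (v₂ 1))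
    (hu : IsCoprime (u 0) (u 1))
    (hdet : 0 < v₁ 0 * v₂ 1 - v₁ 1 * v₂ 0)
    (hdet2 : 0 < u 0 * v₂ 1 - u 1 * v₂ 0)
    (hdet1 : u 0 * v₁ 1 - u 1 * v₁ 0 ≠ 0) :
    let pair : (Fin 2 → ℝ) → (Fin 2 → ℤ) → ℝ := fun ξ w => ξ 0 * (w 0 : ℝ) + ξ 1 * (w 1 : ℝ)
    let φ : (Fin 2 → ℝ) → ℝ := fun ξ =>
      -(1 / pair ξ u) *
        (1 / (1 - Real.exp (pair ξ v₂ / ((u 0 * v₂ 1 - u 1 * v₂ 0 : ℤ) : ℝ))) -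
         1 / (1 - Real.exp (pair ξ v₁ / ((u 0 * v₁ 1 - u 1 * v₁ 0 : ℤ) : ℝ))))
    ∃ g : (Fin 2 → ℝ) → ℝ, AnalyticAt ℝ g 0 ∧
      ∀ᶠ ξ in nhds (0 : Fin 2 → ℝ),
        (pair ξ v₁ ≠ 0 ∧ pair ξ v₂ ≠ 0 ∧ pair ξ u ≠ 0) →
          g ξ = pair ξ v₁ * pair ξ v₂ * φ ξ := by
  intro pair φ
  have hd₁ : ((u 0 * v₁ 1 - u 1 * v₁ 0 : ℤ) : ℝ) ≠ 0 := by exact_mod_cast hdet1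
  have hd₂ : ((u 0 * v₂ 1 - u 1 * v₂ 0 : ℤ) : ℝ) ≠ 0 := by exact_mod_cast hdet2.ne'
  have hD : ((v₁ 0 * v₂ 1 - v₁ 1 * v₂ 0 : ℤ) : ℝ) ≠ 0 := by exact_mod_cast hdet.ne'
  set d₁ : ℝ := ((u 0 * v₁ 1 - u 1 * v₁ 0 : ℤ) : ℝ) with hd₁def
  set d₂ : ℝ := ((u 0 * v₂ 1 - u 1 * v₂ 0 : ℤ) : ℝ) with hd₂def
  set D : ℝ := ((v₁ 0 * v₂ 1 - v₁ 1 * v₂ 0 : ℤ) : ℝ) with hDdef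
  set c : ℝ := -D / (d₁ * d₂) with hcdef
  have hc : c ≠ 0 := div_ne_zero (neg_ne_zero.2 hD) (mul_ne_zero hd₁ hd₂)
  refine ⟨fun ξ => -(d₁ * auxf (pair ξ v₁ / d₁) * (d₂ * auxf (pair ξ v₂ / d₂)) *
      Real.exp (pair ξ v₁ / d₁) * (c * auxEdd (c * pair ξ u))), ?_, ?_⟩
  · -- analyticity
    have hlin : ∀ w : Fin 2 → ℤ,
        AnalyticAt ℝ (fun ξ : Fin 2 → ℝ => ξ 0 * (w 0 : ℝ) + ξ 1 * (w 1 : ℝ)) 0 := by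
      intro w
      exact (((ContinuousLinearMap.proj (R := ℝ) (φ := fun _ : Fin 2 => ℝ) 0).analyticAt
        0).mul analyticAt_const).add
        (((ContinuousLinearMap.proj (R := ℝ) (φ := fun _ : Fin 2 => ℝ) 1).analyticAt
          0).mul analyticAt_const)
    have hx₁ : AnalyticAt ℝ (fun ξ : Fin 2 → ℝ => pair ξ v₁ / d₁) 0 :=
      (hlin v₁).div analyticAt_const hd₁
    have hx₂ : AnalyticAt ℝ (fun ξ : Fin 2 → ℝ => pair ξ v₂ / d₂) 0 :=
      (hlin v₂).div analyticAt_const hd₂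
    have hcs : AnalyticAt ℝ (fun ξ : Fin 2 → ℝ => c * pair ξ u) 0 :=
      analyticAt_const.mul (hlin u)
    have Hf₁ : AnalyticAt ℝ (fun ξ : Fin 2 → ℝ => auxf (pair ξ v₁ / d₁)) 0 := by
      have h0 : pair (0 : Fin 2 → ℝ) v₁ / d₁ = 0 := by simp [pair]
      exact AnalyticAt.comp (g := auxf) (f := fun ξ : Fin 2 → ℝ => pair ξ v₁ / d₁)
        (by rw [h0]
            exact auxf_analytic) hx₁
    have Hf₂ : AnalyticAt ℝ (fun ξ : Fin 2 → ℝ => auxf (pair ξ v₂ / d₂)) 0 := by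
      have h0 : pair (0 : Fin 2 → ℝ) v₂ / d₂ = 0 := by simp [pair]
      exact AnalyticAt.comp (g := auxf) (f := fun ξ : Fin 2 → ℝ => pair ξ v₂ / d₂)
        (by rw [h0]
            exact auxf_analytic) hx₂
    have Hexp : AnalyticAt ℝ (fun ξ : Fin 2 → ℝ => Real.exp (pair ξ v₁ / d₁)) 0 :=
      analyticAt_rexp.comp hx₁
    have HE : AnalyticAt ℝ (fun ξ : Fin 2 → ℝ => auxEdd (c * pair ξ u)) 0 := by
      refine AnalyticAt.comp ?_ hcs
      have h0 : c * pair (0 : Fin 2 → ℝ) u = 0 := by simp [pair]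
      rw [h0]; exact auxEdd_analytic
    exact ((((analyticAt_const.mul Hf₁).mul (analyticAt_const.mul Hf₂)).mul Hexp).mul
      (analyticAt_const.mul HE)).neg
  · -- the identity away from the hyperplanes
    refine Filter.Eventually.of_forall ?_
    rintro ξ ⟨h1, h2, h3⟩
    have hx₁ : pair ξ v₁ / d₁ ≠ 0 := div_ne_zero h1 hd₁
    have hx₂ : pair ξ v₂ / d₂ ≠ 0 := div_ne_zero h2 hd₂
    have hcs : c * pair ξ u ≠ 0 := mul_ne_zero hc h3
    have key0 : -D * pair ξ u = pair ξ v₂ * d₁ - pair ξ v₁ * d₂ := by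
      simp only [pair, hDdef, hd₁def, hd₂def]
      push_cast
      ring
    have key : c * pair ξ u = pair ξ v₂ / d₂ - pair ξ v₁ / d₁ := by
      have h : c * pair ξ u = (-D * pair ξ u) / (d₁ * d₂) := by rw [hcdef]; ring
      rw [h, key0]
      field_simp
    have he₁ : (1 : ℝ) - Real.exp (pair ξ v₁ / d₁) ≠ 0 := by
      intro h
      exact aux_exp_ne_one hx₁ (by linarith)
    have he₂ : (1 : ℝ) - Real.exp (pair ξ v₂ / d₂) ≠ 0 := by
      intro h
      exact aux_exp_ne_one hx₂ (by linarith)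
    have hrw : Real.exp (c * pair ξ u) =
        Real.exp (pair ξ v₂ / d₂) / Real.exp (pair ξ v₁ / d₁) := by
      rw [key, Real.exp_sub]
    show -(d₁ * auxf (pair ξ v₁ / d₁) * (d₂ * auxf (pair ξ v₂ / d₂)) *
        Real.exp (pair ξ v₁ / d₁) * (c * auxEdd (c * pair ξ u))) =
      pair ξ v₁ * pair ξ v₂ *
        (-(1 / pair ξ u) * (1 / (1 - Real.exp (pair ξ v₂ / d₂)) -
          1 / (1 - Real.exp (pair ξ v₁ / d₁))))
    rw [auxf_ne hx₁, auxf_ne hx₂, auxEdd_ne hcs, hrw]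
    exact aux_algebra (pair ξ v₁) (pair ξ v₂) (pair ξ u) d₁ d₂ c
      (Real.exp (pair ξ v₁ / d₁)) (Real.exp (pair ξ v₂ / d₂)) h3 hd₁ hd₂ hc he₁ he₂
      (Real.exp_ne_zero _)
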